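/- Assume every vertex of the graph E has at most one non-neighbour, i.e. for each j ∈ {1,…,d} there is at most one i ≠ j with ¬E i j. Then the commutator subgroup [W(E), W(E)] is a free abelian group, freely generated by the commutators [s_i, s_j] = s_i s_j s_i s_j taken over the unordered pairs {i, j} with i < j and ¬E i j; in particular its rank equals the number of non-adjacent pairs of E. -/

import Mathlib

/-- Relators of the right-angled Coxeter group of the graph `E`:
`s j ^ 2` for every vertex `j`, and `(s i * s j) ^ 2` for every edge `{i, j}` of `E`. -/
def racgRels {d : ℕ} (E : Fin d → Fin d → Prop) : Set (FreeGroup (Fin d)) :=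
  {r | (∃ j : Fin d, r = FreeGroup.of j ^ 2) ∨
    ∃ i j : Fin d, E i j ∧ r = (FreeGroup.of i * FreeGroup.of j) ^ 2}

/-- The right-angled Coxeter group `W(E)` of the graph `E`. -/
abbrev RACG {d : ℕ} (E : Fin d → Fin d → Prop) : Type := PresentedGroup (racgRels E)

/-- The standard generator `s j` of the right-angled Coxeter group `W(E)`. -/
def racgGen {d : ℕ} (E : Fin d → Fin d → Prop) (j : Fin d) : RACG E :=
  PresentedGroup.of j

open scoped commutatorElement

namespace Racg9

variable {d : ℕ} {E : Fin d → Fin d → Prop}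

abbrev NP (E : Fin d → Fin d → Prop) := {p : Fin d × Fin d // p.1 < p.2 ∧ ¬ E p.1 p.2}

theorem rel_one {r : FreeGroup (Fin d)} (hr : r ∈ racgRels E) :
    PresentedGroup.mk (racgRels E) r = 1 :=
  (QuotientGroup.eq_one_iff r).2 (Subgroup.subset_normalClosure hr)

theorem gen_sq (j : Fin d) : racgGen E j ^ 2 = 1 := by
  have := rel_one (E := E) (Or.inl ⟨j, rfl⟩)
  rwa [map_pow] at this

theorem gen_mul_self (j : Fin d) : racgGen E j * racgGen E j = 1 := by
  rw [← sq]; exact gen_sq j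

theorem gen_inv (j : Fin d) : (racgGen E j)⁻¹ = racgGen E j :=
  inv_eq_of_mul_eq_one_right (gen_mul_self j)

theorem gen_cancel (j : Fin d) (x : RACG E) : racgGen E j * (racgGen E j * x) = x := by
  rw [← mul_assoc, gen_mul_self, one_mul]

theorem edge_sq {i j : Fin d} (hij : E i j) : (racgGen E i * racgGen E j) ^ 2 = 1 := by
  have := rel_one (E := E) (Or.inr ⟨i, j, hij, rfl⟩)
  rwa [map_pow, map_mul] at this

theorem gen_comm {i j : Fin d} (hij : E i j) : Commute (racgGen E i) (racgGen E j) := by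
  have h2 := edge_sq hij
  rw [sq] at h2
  have h3 : racgGen E i * racgGen E j = (racgGen E i * racgGen E j)⁻¹ :=
    eq_inv_of_mul_eq_one_left h2
  rw [mul_inv_rev, gen_inv, gen_inv] at h3
  exact h3

end Racg9

namespace Racg9

variable {d : ℕ} {E : Fin d → Fin d → Prop}

def zgen (E : Fin d → Fin d → Prop) (p : NP E) : RACG E :=
  ⁅racgGen E p.1.1, racgGen E p.1.2⁆

theorem zgen_eq (p : NP E) :
    zgen E p = racgGen E p.1.1 * racgGen E p.1.2 * racgGen E p.1.1 * racgGen E p.1.2 := by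
  rw [zgen, commutatorElement_def, gen_inv, gen_inv]

theorem zgen_inv (p : NP E) :
    (zgen E p)⁻¹ = racgGen E p.1.2 * racgGen E p.1.1 * racgGen E p.1.2 * racgGen E p.1.1 := by
  rw [zgen_eq]
  simp only [mul_inv_rev, gen_inv, mul_assoc]

section Comb

variable (hsymm : ∀ i j, E i j → E j i)
  (huniq : ∀ j i k : Fin d, i ≠ j → k ≠ j → ¬ E i j → ¬ E k j → i = k)

include hsymm huniq

theorem pair_eq_of_shared (p q : NP E) (v : Fin d)
    (hv1 : v = p.1.1 ∨ v = p.1.2) (hv2 : v = q.1.1 ∨ v = q.1.2) : p = q := by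
  obtain ⟨⟨a, b⟩, hab, hEab⟩ := p
  obtain ⟨⟨c, e⟩, hce, hEce⟩ := q
  simp only at hv1 hv2 hab hce hEab hEce
  have hEba : ¬ E b a := fun hh => hEab (hsymm _ _ hh)
  have hEec : ¬ E e c := fun hh => hEce (hsymm _ _ hh)
  rcases hv1 with rfl | rfl <;> rcases hv2 with rfl | rfl
  · -- v = a = c
    have : b = e := huniq v b e (ne_of_gt hab) (ne_of_gt hce) hEba hEec
    subst this; rfl
  · -- v = a = e : b and c both non-neighbours of v
    have : b = c := huniq v b c (ne_of_gt hab) (ne_of_lt hce) hEba hEce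
    subst this
    exact absurd (hce.trans hab) (lt_irrefl _)
  · -- v = b = c : a and e both non-neighbours of v
    have : a = e := huniq v a e (ne_of_lt hab) (ne_of_gt hce) hEab hEec
    subst this
    exact absurd (hab.trans hce) (lt_irrefl _)
  · -- v = b = e
    have : a = c := huniq v a c (ne_of_lt hab) (ne_of_lt hce) hEab hEce
    subst this; rfl

theorem cross_adj {p q : NP E} (hpq : p ≠ q) {a b : Fin d}
    (ha : a = p.1.1 ∨ a = p.1.2) (hb : b = q.1.1 ∨ b = q.1.2) : E a b := by
  by_contra hnE
  rcases eq_or_ne a b with rfl | hab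
  · exact hpq (pair_eq_of_shared hsymm huniq p q a ha hb)
  · have hba : ¬ E b a := fun hh => hnE (hsymm _ _ hh)
    rcases ha with rfl | rfl
    · -- a = p.1.1, partner p.1.2
      have hEp : ¬ E p.1.2 p.1.1 := fun hh => p.2.2 (hsymm _ _ hh)
      have : b = p.1.2 :=
        huniq p.1.1 b p.1.2 (Ne.symm hab) (ne_of_gt p.2.1) hba hEp
      exact hpq (pair_eq_of_shared hsymm huniq p q b (Or.inr this) hb)
    · -- a = p.1.2, partner p.1.1
      have : b = p.1.1 :=
        huniq p.1.2 b p.1.1 (Ne.symm hab) (ne_of_lt p.2.1) hba p.2.2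
      exact hpq (pair_eq_of_shared hsymm huniq p q b (Or.inl this) hb)

theorem zgen_commute (p q : NP E) : Commute (zgen E p) (zgen E q) := by
  rcases eq_or_ne p q with rfl | hpq
  · exact Commute.refl _
  · have c11 := gen_comm (E := E) (cross_adj hsymm huniq hpq (Or.inl rfl) (Or.inl rfl))
    have c12 := gen_comm (E := E) (cross_adj hsymm huniq hpq (Or.inl rfl) (Or.inr rfl))
    have c21 := gen_comm (E := E) (cross_adj hsymm huniq hpq (Or.inr rfl) (Or.inl rfl))
    have c22 := gen_comm (E := E) (cross_adj hsymm huniq hpq (Or.inr rfl) (Or.inr rfl))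
    have d1 : Commute (racgGen E p.1.1) (zgen E q) := by
      rw [zgen_eq]
      exact ((c11.mul_right c12).mul_right c11).mul_right c12
    have d2 : Commute (racgGen E p.1.2) (zgen E q) := by
      rw [zgen_eq]
      exact ((c21.mul_right c22).mul_right c21).mul_right c22
    rw [zgen_eq p]
    exact ((d1.mul_left d2).mul_left d1).mul_left d2

end Comb

end Racg9

namespace Racg9

variable {d : ℕ} {E : Fin d → Fin d → Prop}

/-- The subgroup generated by the pair commutators. -/
def Csub (E : Fin d → Fin d → Prop) : Subgroup (RACG E) :=
  Subgroup.closure (Set.range (zgen E))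

theorem zgen_mem (p : NP E) : zgen E p ∈ Csub E :=
  Subgroup.subset_closure ⟨p, rfl⟩

section Comb

variable (hsymm : ∀ i j, E i j → E j i)
  (huniq : ∀ j i k : Fin d, i ≠ j → k ≠ j → ¬ E i j → ¬ E k j → i = k)

include hsymm huniq

omit hsymm huniq in
theorem conj_zgen_fst (p : NP E) :
    racgGen E p.1.1 * zgen E p * (racgGen E p.1.1)⁻¹ = (zgen E p)⁻¹ := by
  rw [zgen_inv, gen_inv, zgen_eq]
  simp only [mul_assoc, gen_cancel, gen_mul_self, mul_one]

omit hsymm huniq in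
theorem conj_zgen_snd (p : NP E) :
    racgGen E p.1.2 * zgen E p * (racgGen E p.1.2)⁻¹ = (zgen E p)⁻¹ := by
  rw [zgen_inv, gen_inv, zgen_eq]
  simp only [mul_assoc, gen_cancel, gen_mul_self, mul_one]

theorem conj_zgen (k : Fin d) (p : NP E) :
    racgGen E k * zgen E p * (racgGen E k)⁻¹ ∈ Csub E := by
  rcases eq_or_ne k p.1.1 with hk | hk1
  · rw [hk, conj_zgen_fst]
    exact (Csub E).inv_mem (zgen_mem p)
  · rcases eq_or_ne k p.1.2 with hk | hk2
    · rw [hk, conj_zgen_snd]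
      exact (Csub E).inv_mem (zgen_mem p)
    · have e1 : E k p.1.1 := by
        by_contra hnE
        have h1 : ¬ E p.1.2 p.1.1 := fun hh => p.2.2 (hsymm _ _ hh)
        exact hk2 (huniq p.1.1 k p.1.2 hk1 (ne_of_gt p.2.1) hnE h1)
      have e2 : E k p.1.2 := by
        by_contra hnE
        exact hk1 (huniq p.1.2 k p.1.1 hk2 (ne_of_lt p.2.1) hnE p.2.2)
      have c1 := gen_comm (E := E) e1
      have c2 := gen_comm (E := E) e2
      have hc : Commute (racgGen E k) (zgen E p) := by
        rw [zgen_eq]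
        exact ((c1.mul_right c2).mul_right c1).mul_right c2
      rw [hc.eq, mul_assoc, gen_inv, gen_mul_self, mul_one]
      exact zgen_mem p

theorem Csub_normal : (Csub E).Normal := by
  rw [← Subgroup.normalizer_eq_top_iff, ← top_le_iff]
  intro x _
  refine PresentedGroup.generated_by _ _ (fun j => ?_) x
  show racgGen E j ∈ Subgroup.normalizer (Csub E : Set (RACG E))
  have fwd : ∀ n ∈ Csub E, racgGen E j * n * (racgGen E j)⁻¹ ∈ Csub E := by
    intro n hn
    have hmap : Subgroup.map (MulAut.conj (racgGen E j)).toMonoidHom (Csub E) ≤ Csub E := by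
      rw [Csub, MonoidHom.map_closure]
      refine Subgroup.closure_le _ |>.2 ?_
      rintro y ⟨z, ⟨p, rfl⟩, rfl⟩
      simpa [Csub] using conj_zgen hsymm huniq j p
    exact hmap ⟨n, hn, rfl⟩
  rw [Subgroup.mem_normalizer_iff]
  intro n
  refine ⟨fun hn => fwd n hn, fun hn => ?_⟩
  have h2 := fwd _ hn
  have key : racgGen E j * (racgGen E j * n * (racgGen E j)⁻¹) * (racgGen E j)⁻¹ = n := by
    rw [gen_inv]
    simp only [mul_assoc, gen_cancel]
    rw [gen_mul_self, mul_one]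
  rwa [key] at h2

end Comb

end Racg9

namespace Racg9

variable {d : ℕ} {E : Fin d → Fin d → Prop}

theorem Csub_le_commutator : Csub E ≤ commutator (RACG E) := by
  refine Subgroup.closure_le _ |>.2 ?_
  rintro y ⟨p, rfl⟩
  exact Subgroup.commutator_mem_commutator (Subgroup.mem_top _) (Subgroup.mem_top _)

section Comb2

variable (hsymm : ∀ i j, E i j → E j i) (hirr : ∀ i, ¬ E i i)
  (huniq : ∀ j i k : Fin d, i ≠ j → k ≠ j → ¬ E i j → ¬ E k j → i = k)

include hsymm hirr huniq

theorem commutator_le_Csub : commutator (RACG E) ≤ Csub E := by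
  letI : (Csub E).Normal := Csub_normal hsymm huniq
  let mk : RACG E →* RACG E ⧸ Csub E := QuotientGroup.mk' (Csub E)
  have hsurj : Function.Surjective mk := QuotientGroup.mk'_surjective _
  -- the images of the generators pairwise commute
  have comm_mk : ∀ i j : Fin d, Commute (mk (racgGen E i)) (mk (racgGen E j)) := by
    intro i j
    rcases eq_or_ne i j with rfl | hij
    · exact Commute.refl _
    by_cases hE : E i j
    · exact (gen_comm hE).map mk
    · have hmem : ⁅racgGen E i, racgGen E j⁆ ∈ Csub E := by
        rcases lt_or_gt_of_ne hij with hlt | hgt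
        · exact zgen_mem ⟨(i, j), hlt, hE⟩
        · have hE' : ¬ E j i := fun hh => hE (hsymm _ _ hh)
          have hm := zgen_mem (E := E) ⟨(j, i), hgt, hE'⟩
          rw [show (⁅racgGen E i, racgGen E j⁆) = (⁅racgGen E j, racgGen E i⁆)⁻¹ from
            (commutatorElement_inv _ _).symm]
          exact (Csub E).inv_mem hm
      have h1 : ⁅mk (racgGen E i), mk (racgGen E j)⁆ = 1 := by
        rw [← map_commutatorElement]
        exact (QuotientGroup.eq_one_iff _).2 hmem
      exact commutatorElement_eq_one_iff_commute.1 h1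
  -- generators are central in the quotient
  have gen_center : ∀ j : Fin d, mk (racgGen E j) ∈ Subgroup.center (RACG E ⧸ Csub E) := by
    intro j
    rw [Subgroup.mem_center_iff]
    intro y
    obtain ⟨v, rfl⟩ := hsurj y
    have hv : v ∈ (Subgroup.centralizer {mk (racgGen E j)}).comap mk := by
      refine PresentedGroup.generated_by _ _ (fun i => ?_) v
      refine Subgroup.mem_comap.2 (Subgroup.mem_centralizer_iff.2 ?_)
      intro h' hh'
      rw [Set.mem_singleton_iff] at hh'
      subst hh'
      exact comm_mk j i
    exact (Subgroup.mem_centralizer_iff.1 (Subgroup.mem_comap.1 hv) _ rfl).symm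
  -- every element of the quotient is central
  have all_center : ∀ v : RACG E, mk v ∈ Subgroup.center (RACG E ⧸ Csub E) := by
    intro v
    have hv : v ∈ (Subgroup.center (RACG E ⧸ Csub E)).comap mk :=
      PresentedGroup.generated_by _ _ (fun j => Subgroup.mem_comap.2 (gen_center j)) v
    exact Subgroup.mem_comap.1 hv
  rw [commutator_def]
  refine Subgroup.commutator_le.2 ?_
  intro g₁ _ g₂ _
  refine (QuotientGroup.eq_one_iff _).1 ?_
  have : (mk ⁅g₁, g₂⁆ : RACG E ⧸ Csub E) = 1 := by
    rw [map_commutatorElement]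
    exact commutatorElement_eq_one_iff_commute.2
      ((Subgroup.mem_center_iff.1 (all_center g₁) (mk g₂)).symm)
  exact this

end Comb2

end Racg9

namespace Racg9

variable {d : ℕ} {E : Fin d → Fin d → Prop}

/-- Negation of `ℤ` as a permutation. -/
def negP : Equiv.Perm ℤ :=
  Function.Involutive.toPerm (fun x => -x) (fun x => by ring)

/-- Reflection `x ↦ 1 - x` of `ℤ` as a permutation. -/
def refP : Equiv.Perm ℤ :=
  Function.Involutive.toPerm (fun x => 1 - x) (fun x => by ring)

theorem negP_mul_self : negP * negP = 1 := by
  ext x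
  simp [negP, Equiv.Perm.mul_apply, Function.Involutive.coe_toPerm]
  exact neg_neg x

theorem refP_mul_self : refP * refP = 1 := by
  ext x
  simp only [refP, Equiv.Perm.mul_apply, Function.Involutive.coe_toPerm,
    Equiv.Perm.one_apply]
  show 1 - (1 - x) = x
  ring

/-- The image of the generator `s k` under the dihedral representation attached to
the non-adjacent pair `p`. -/
def Fgen (p : NP E) (k : Fin d) : Equiv.Perm ℤ :=
  if k = p.1.1 then negP else if k = p.1.2 then refP else 1

theorem Fgen_mul_self (p : NP E) (k : Fin d) : Fgen p k * Fgen p k = 1 := by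
  unfold Fgen
  split_ifs <;> simp [negP_mul_self, refP_mul_self]

theorem pi_rels (hsymm : ∀ i j, E i j → E j i) (hirr : ∀ i, ¬ E i i) (p : NP E) :
    ∀ r ∈ racgRels E, FreeGroup.lift (Fgen p) r = 1 := by
  rintro r (⟨j, rfl⟩ | ⟨i, j, hij, rfl⟩)
  · rw [map_pow, FreeGroup.lift_apply_of, sq, Fgen_mul_self]
  · rw [map_pow, map_mul, FreeGroup.lift_apply_of, FreeGroup.lift_apply_of, sq]
    have hone : Fgen p i = 1 ∨ Fgen p j = 1 := by
      rcases eq_or_ne i p.1.1 with hi1 | hi1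
      · rcases eq_or_ne j p.1.1 with hj1 | hj1
        · exact absurd (hi1 ▸ hj1 ▸ hij) (hirr _)
        · rcases eq_or_ne j p.1.2 with hj2 | hj2
          · exact absurd (hi1 ▸ hj2 ▸ hij) p.2.2
          · exact Or.inr (by simp [Fgen, hj1, hj2])
      · rcases eq_or_ne i p.1.2 with hi2 | hi2
        · rcases eq_or_ne j p.1.1 with hj1 | hj1
          · exact absurd (hsymm _ _ (hi2 ▸ hj1 ▸ hij)) p.2.2
          · rcases eq_or_ne j p.1.2 with hj2 | hj2
            · exact absurd (hi2 ▸ hj2 ▸ hij) (hirr _)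
            · exact Or.inr (by simp [Fgen, hj1, hj2])
        · exact Or.inl (by simp [Fgen, hi1, hi2])
    rcases hone with h1 | h1 <;> rw [h1]
    · rw [one_mul, Fgen_mul_self]
    · rw [mul_one, Fgen_mul_self]

/-- The dihedral representation of `W(E)` attached to a non-adjacent pair. -/
noncomputable def piHom (hsymm : ∀ i j, E i j → E j i) (hirr : ∀ i, ¬ E i i) (p : NP E) :
    RACG E →* Equiv.Perm ℤ :=
  PresentedGroup.toGroup (pi_rels hsymm hirr p)

theorem piHom_gen (hsymm) (hirr) (p : NP E) (k : Fin d) :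
    piHom (E := E) hsymm hirr p (racgGen E k) = Fgen p k :=
  PresentedGroup.toGroup.of _

theorem piHom_zgen_self (hsymm) (hirr) (p : NP E) :
    piHom (E := E) hsymm hirr p (zgen E p) = Equiv.addLeft (-2 : ℤ) := by
  rw [zgen, map_commutatorElement, piHom_gen, piHom_gen]
  have h1 : Fgen p p.1.1 = negP := by simp [Fgen]
  have h2 : Fgen p p.1.2 = refP := by
    have : p.1.2 ≠ p.1.1 := ne_of_gt p.2.1
    simp [Fgen, this]
  rw [h1, h2]
  ext x
  simp only [commutatorElement_def, negP, refP, Equiv.Perm.mul_apply,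
    Equiv.Perm.inv_def, Function.Involutive.toPerm_symm, Function.Involutive.coe_toPerm,
    Equiv.coe_addLeft]
  show -(1 - -(1 - x)) = -2 + x
  ring

theorem piHom_zgen_ne (hsymm : ∀ i j, E i j → E j i)
    (huniq : ∀ j i k : Fin d, i ≠ j → k ≠ j → ¬ E i j → ¬ E k j → i = k)
    (hirr : ∀ i, ¬ E i i) (p q : NP E) (hq : q ≠ p) :
    piHom (E := E) hsymm hirr p (zgen E q) = 1 := by
  rw [zgen, map_commutatorElement, piHom_gen, piHom_gen]
  have h1 : Fgen p q.1.1 = 1 := by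
    have n1 : q.1.1 ≠ p.1.1 := fun hh =>
      hq (pair_eq_of_shared hsymm huniq q p q.1.1 (Or.inl rfl) (Or.inl hh))
    have n2 : q.1.1 ≠ p.1.2 := fun hh =>
      hq (pair_eq_of_shared hsymm huniq q p q.1.1 (Or.inl rfl) (Or.inr hh))
    simp [Fgen, n1, n2]
  have h2 : Fgen p q.1.2 = 1 := by
    have n1 : q.1.2 ≠ p.1.1 := fun hh =>
      hq (pair_eq_of_shared hsymm huniq q p q.1.2 (Or.inr rfl) (Or.inl hh))
    have n2 : q.1.2 ≠ p.1.2 := fun hh =>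
      hq (pair_eq_of_shared hsymm huniq q p q.1.2 (Or.inr rfl) (Or.inr hh))
    simp [Fgen, n1, n2]
  rw [h1, h2]
  simp

end Racg9

namespace Racg9

variable {d : ℕ} {E : Fin d → Fin d → Prop}

/-- `Csub E` is commutative. -/
noncomputable def CsubCommGroup (hsymm : ∀ i j, E i j → E j i)
    (huniq : ∀ j i k : Fin d, i ≠ j → k ≠ j → ¬ E i j → ¬ E k j → i = k) :
    CommGroup ↥(Csub E) :=
  Subgroup.closureCommGroupOfComm (k := Set.range (zgen E)) (by
    rintro x ⟨p, rfl⟩ y ⟨q, rfl⟩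
    exact zgen_commute hsymm huniq p q)

/-- The homomorphism from the free abelian group on the non-adjacent pairs to the
subgroup generated by the pair commutators. -/
noncomputable def psiC (hsymm : ∀ i j, E i j → E j i)
    (huniq : ∀ j i k : Fin d, i ≠ j → k ≠ j → ¬ E i j → ¬ E k j → i = k) :
    Multiplicative (NP E →₀ ℤ) →* ↥(Csub E) :=
  letI := CsubCommGroup hsymm huniq
  AddMonoidHom.toMultiplicativeLeft
    (Finsupp.liftAddHom fun p =>
      zmultiplesHom (Additive ↥(Csub E)) (Additive.ofMul ⟨zgen E p, zgen_mem p⟩))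

theorem psiC_single (hsymm) (huniq) (p : NP E) (n : ℤ) :
    ((psiC (E := E) hsymm huniq (Multiplicative.ofAdd (Finsupp.single p n)) : ↥(Csub E)) : RACG E) =
      zgen E p ^ n := by
  letI := CsubCommGroup hsymm huniq
  simp only [psiC, AddMonoidHom.coe_toMultiplicativeLeft, Function.comp_apply]
  change ((Additive.toMul ((Finsupp.liftAddHom fun p =>
      zmultiplesHom (Additive ↥(Csub E)) (Additive.ofMul ⟨zgen E p, zgen_mem p⟩))
      (Finsupp.single p n)) : ↥(Csub E)) : RACG E) = zgen E p ^ n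
  erw [Finsupp.liftAddHom_apply_single]
  erw [show (zmultiplesHom (Additive ↥(Csub E)) (Additive.ofMul ⟨zgen E p, zgen_mem p⟩)) n =
    n • (Additive.ofMul (⟨zgen E p, zgen_mem p⟩ : ↥(Csub E))) from rfl]
  change ((Additive.toMul (n • Additive.ofMul (⟨zgen E p, zgen_mem p⟩ : ↥(Csub E))) :
    ↥(Csub E)) : RACG E) = zgen E p ^ n
  rw [toMul_zsmul]
  simp

theorem piHom_psiC (hsymm : ∀ i j, E i j → E j i) (hirr : ∀ i, ¬ E i i)
    (huniq : ∀ j i k : Fin d, i ≠ j → k ≠ j → ¬ E i j → ¬ E k j → i = k)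
    (f : NP E →₀ ℤ) (p : NP E) :
    piHom (E := E) hsymm hirr p
        ((psiC hsymm huniq (Multiplicative.ofAdd f) : ↥(Csub E)) : RACG E) =
      Equiv.addLeft (-2 * f p) := by
  induction f using Finsupp.induction with
  | zero =>
    rw [show Multiplicative.ofAdd (0 : NP E →₀ ℤ) = 1 from rfl]
    simp
  | single_add q n g hqg hn ih =>
    rw [show Multiplicative.ofAdd (Finsupp.single q n + g) =
      Multiplicative.ofAdd (Finsupp.single q n) * Multiplicative.ofAdd g from rfl]
    rw [map_mul, Subgroup.coe_mul, map_mul, ih, psiC_single, map_zpow]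
    rcases eq_or_ne q p with rfl | hqp
    · rw [piHom_zgen_self, Equiv.zsmul_addLeft, ← Equiv.addLeft_add]
      congr 1
      simp only [Finsupp.coe_add, Pi.add_apply, Finsupp.single_eq_same, smul_eq_mul]
      ring
    · rw [piHom_zgen_ne hsymm huniq hirr p q hqp, one_zpow, one_mul]
      congr 1
      simp only [Finsupp.coe_add, Pi.add_apply, Finsupp.single_eq_of_ne' hqp, zero_add]

theorem psiC_inj (hsymm : ∀ i j, E i j → E j i) (hirr : ∀ i, ¬ E i i)
    (huniq : ∀ j i k : Fin d, i ≠ j → k ≠ j → ¬ E i j → ¬ E k j → i = k) :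
    Function.Injective (psiC (E := E) hsymm huniq) := by
  rw [injective_iff_map_eq_one]
  intro f hf
  have hf' : ∀ p : NP E, Multiplicative.toAdd f p = 0 := by
    intro p
    have h1 := piHom_psiC hsymm hirr huniq (Multiplicative.toAdd f) p
    rw [show Multiplicative.ofAdd (Multiplicative.toAdd f) = f from rfl, hf] at h1
    have h2 := congrArg (fun (e : Equiv.Perm ℤ) => e 0) h1
    simp only [OneMemClass.coe_one, map_one, Equiv.Perm.one_apply, Equiv.coe_addLeft,
      add_zero] at h2
    omega
  exact Multiplicative.toAdd.injective (Finsupp.ext hf')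

end Racg9


open Racg9

/-- If every vertex of `E` has at most one non-neighbour, then `[W(E), W(E)]` is free
abelian, freely generated by the commutators `⁅s i, s j⁆` over the non-adjacent pairs
`i < j` of `E`; in particular its rank is the number of non-adjacent pairs. -/
theorem stmt_9 {d : ℕ} (hd : 1 ≤ d) (E : Fin d → Fin d → Prop)
    (hsymm : ∀ i j, E i j → E j i) (hirr : ∀ i, ¬ E i i)
    (h : ∀ j i k : Fin d, i ≠ j → k ≠ j → ¬ E i j → ¬ E k j → i = k) :
    ∃ e : Multiplicative ({p : Fin d × Fin d // p.1 < p.2 ∧ ¬ E p.1 p.2} →₀ ℤ) ≃*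
        ↥(commutator (RACG E)),
      ∀ p : {p : Fin d × Fin d // p.1 < p.2 ∧ ¬ E p.1 p.2},
        (e (Multiplicative.ofAdd (Finsupp.single p 1)) : RACG E) =
          ⁅racgGen E p.1.1, racgGen E p.1.2⁆ := by
  classical
  let Ψ : Multiplicative (NP E →₀ ℤ) →* ↥(commutator (RACG E)) :=
    (Subgroup.inclusion Csub_le_commutator).comp (psiC hsymm h)
  have hΨcoe : ∀ f, ((Ψ f : ↥(commutator (RACG E))) : RACG E) =
      ((psiC hsymm h f : ↥(Csub E)) : RACG E) := by
    intro f
    rfl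
  have hval : ∀ (p : NP E) (n : ℤ),
      ((Ψ (Multiplicative.ofAdd (Finsupp.single p n)) : ↥(commutator (RACG E))) : RACG E) =
        zgen E p ^ n := by
    intro p n
    rw [hΨcoe]
    exact psiC_single hsymm h p n
  have hinj : Function.Injective Ψ := by
    intro a b hab
    apply psiC_inj hsymm hirr h
    apply Subtype.ext
    have := congrArg (fun x : ↥(commutator (RACG E)) => (x : RACG E)) hab
    simpa only [hΨcoe] using this
  have hsurj : Function.Surjective Ψ := by
    intro x
    have hx : (x : RACG E) ∈ Csub E := commutator_le_Csub hsymm hirr h x.2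
    have hrange : Csub E ≤ (((Csub E).subtype).comp (psiC hsymm h)).range := by
      show Subgroup.closure (Set.range (zgen E)) ≤ _
      refine (Subgroup.closure_le _).2 ?_
      rintro y ⟨p, rfl⟩
      refine ⟨Multiplicative.ofAdd (Finsupp.single p 1), ?_⟩
      show ((psiC hsymm h (Multiplicative.ofAdd (Finsupp.single p 1)) : ↥(Csub E)) : RACG E) =
        zgen E p
      rw [psiC_single hsymm h p 1, zpow_one]
    obtain ⟨f, hf⟩ := hrange hx
    refine ⟨f, ?_⟩
    apply Subtype.ext
    rw [hΨcoe]
    exact hf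
  refine ⟨MulEquiv.ofBijective Ψ ⟨hinj, hsurj⟩, fun p => ?_⟩
  show ((Ψ (Multiplicative.ofAdd (Finsupp.single p 1)) : ↥(commutator (RACG E))) : RACG E) = _
  rw [hval p 1, zpow_one]
  rfl
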